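/- Let j be a translational covariant discrete vector field on ZMod N. There exists a real-valued function h of the configuration such that j_η(x, x+1) = τ_{x+1}h(η) − τ_x h(η) for every configuration η and every x ∈ ZMod N (i.e. j is of gradient type, with possibly non-local h) if and only if ∑_{x ∈ ZMod N} j_η(x, x+1) = 0 for every configuration η. -/

import Mathlib

/-- **Gradient criterion in dimension one.**
A translational covariant discrete vector field `j` on `ZMod N`
(`j η x` is `j_η(x,x+1)`, covariance: `j_{τ_z η}(x+z, x+z+1) = j_η(x,x+1)` with
`(τ_z η)(w) = η (w - z)`) is of gradient type, i.e. there exists a (possibly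
non-local) function `h` of the configuration with
`j_η(x,x+1) = τ_{x+1}h(η) - τ_x h(η)` (where `τ_x f (η) = f (fun w => η (w + x))`),
if and only if `∑_{x ∈ ZMod N} j_η(x,x+1) = 0` for every configuration `η`. -/
theorem stmt_2 {N : ℕ} [NeZero N] (hN : 2 ≤ N) {S : Type*}
    (j : (ZMod N → S) → ZMod N → ℝ)
    (hcov : ∀ (η : ZMod N → S) (z x : ZMod N), j (fun w => η (w - z)) (x + z) = j η x) :
    (∃ h : (ZMod N → S) → ℝ, ∀ (η : ZMod N → S) (x : ZMod N),
        j η x = h (fun w => η (w + (x + 1))) - h (fun w => η (w + x)))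
      ↔ (∀ η : ZMod N → S, ∑ x : ZMod N, j η x = 0) := by
  have hN0 : (N : ℝ) ≠ 0 := Nat.cast_ne_zero.mpr (by omega)
  have hvalone : (1 : ZMod N).val = 1 := by
    rw [ZMod.val_one_eq_one_mod]; exact Nat.mod_eq_of_lt (by omega)
  -- shift lemma: j (σ^a η) y = j η (y + a)
  have hshift : ∀ (η : ZMod N → S) (a y : ZMod N),
      j (fun w => η (w + a)) y = j η (y + a) := by
    intro η a y
    have := hcov η (-a) (y + a)
    simp only [sub_neg_eq_add, add_neg_cancel_right] at this
    exact this
  constructor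
  · rintro ⟨h, hh⟩ η
    have h0 : ∑ x : ZMod N, j η x
        = ∑ x : ZMod N, (h (fun w => η (w + (x + 1))) - h (fun w => η (w + x))) :=
      Finset.sum_congr rfl fun x _ => hh η x
    rw [h0, Finset.sum_sub_distrib]
    have h1 : ∑ x : ZMod N, h (fun w => η (w + (x + 1)))
        = ∑ x : ZMod N, h (fun w => η (w + x)) :=
      Fintype.sum_bijective (· + 1) (Equiv.addRight (1 : ZMod N)).bijective _ _
        (fun x => rfl)
    rw [h1, sub_self]
  · intro hsum
    refine ⟨fun η => ∑ u : ZMod N, ((u.val : ℝ) / N) * j η u, fun η x => ?_⟩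
    have h1 : ∀ y : ZMod N, j (fun w => η (w + (x + 1))) y = j η (y + (x + 1)) :=
      fun y => hshift η (x + 1) y
    have h2 : ∀ y : ZMod N, j (fun w => η (w + x)) y = j η (y + x) :=
      fun y => hshift η x y
    simp only [h1, h2]
    have e1 : ∑ u : ZMod N, ((u.val : ℝ) / N) * j η (u + (x + 1))
        = ∑ v : ZMod N, (((v - (x + 1)).val : ℝ) / N) * j η v := by
      refine Fintype.sum_bijective (· + (x + 1))
        (Equiv.addRight (x + 1 : ZMod N)).bijective _ _ (fun u => ?_)
      simp
    have e2 : ∑ u : ZMod N, ((u.val : ℝ) / N) * j η (u + x)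
        = ∑ v : ZMod N, (((v - x).val : ℝ) / N) * j η v := by
      refine Fintype.sum_bijective (· + x)
        (Equiv.addRight (x : ZMod N)).bijective _ _ (fun u => ?_)
      simp
    rw [e1, e2, ← Finset.sum_sub_distrib]
    have key : ∀ v ∈ Finset.univ,
        (((v - (x + 1)).val : ℝ) / N) * j η v - (((v - x).val : ℝ) / N) * j η v
        = (if v = x then (1 : ℝ) else 0) * j η v - (1 / N) * j η v := by
      intro v _
      rw [← sub_mul, ← sub_mul]
      congr 1
      by_cases hv : v = x
      · subst hv
        rw [if_pos rfl]
        have hx1 : v - (v + 1) = -1 := by ring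
        have hxx : v - v = 0 := sub_self v
        have hne : NeZero (1 : ZMod N) :=
          ⟨fun h => by rw [h, ZMod.val_zero] at hvalone; exact absurd hvalone (by simp)⟩
        have hneg : ((-1 : ZMod N)).val = N - 1 := by
          rw [ZMod.val_neg_of_ne_zero, hvalone]
        rw [hx1, hxx, hneg, ZMod.val_zero]
        rw [Nat.cast_sub (by omega : 1 ≤ N)]
        push_cast
        field_simp
        ring
      · rw [if_neg hv]
        have hvx : v - x ≠ 0 := sub_ne_zero.mpr hv
        have hle : (1 : ZMod N).val ≤ (v - x).val := by
          rw [hvalone]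
          exact Nat.one_le_iff_ne_zero.mpr
            (fun h0 => hvx ((ZMod.val_eq_zero _).mp h0))
        have hsplit : v - (x + 1) = (v - x) - 1 := by ring
        rw [hsplit, ZMod.val_sub hle, hvalone,
          Nat.cast_sub (hvalone ▸ hle : 1 ≤ (v - x).val)]
        push_cast
        ring
    rw [Finset.sum_congr rfl key, Finset.sum_sub_distrib]
    simp [ite_mul, ← Finset.mul_sum, hsum η]
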